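/- If either λΦ′(0) > 1 + 2αJΦ′(0), or (λΦ′(0) ≤ 1 + 2αJΦ′(0) and 2αJΦ′(0) > 1), then the origin is an unstable equilibrium of the dynamical system generated by Ψ: there exists ε > 0 such that for every δ > 0 there is an orbit with ‖(p₀,d₀)‖ < δ and with ‖(p_n,d_n)‖ ≥ ε for some n ≥ 1. -/

import Mathlib

lemma deriv_nonneg_of_monotone {Φ : ℝ → ℝ} (hmono : Monotone Φ) {f' x : ℝ}
    (h : HasDerivAt Φ f' x) : 0 ≤ f' := by
  have h' := (h.hasDerivWithinAt (s := Set.Ioi x))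
  rw [hasDerivWithinAt_iff_tendsto_slope,
    Set.diff_singleton_eq_self (by simp : x ∉ Set.Ioi x)] at h'
  refine ge_of_tendsto h' ?_
  filter_upwards [self_mem_nhdsWithin] with y hy
  have hxy : x < y := hy
  have h2 : Φ x ≤ Φ y := hmono hxy.le
  rw [slope_def_field]
  apply div_nonneg <;> linarith

lemma growth_false (w : ℕ → ℝ) (c B : ℝ) (hc : 1 < c) (h0 : 0 < w 0)
    (hstep : ∀ n, c * w n ≤ w (n + 1)) (hB : ∀ n, w n ≤ B) : False := by
  have hcpos : (0:ℝ) < c := lt_trans one_pos hc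
  have hpow : ∀ n, c ^ n * w 0 ≤ w n := by
    intro n; induction n with
    | zero => simp
    | succ n ih =>
      calc c ^ (n+1) * w 0 = c * (c ^ n * w 0) := by ring
      _ ≤ c * w n := by nlinarith
      _ ≤ w (n+1) := hstep n
  obtain ⟨n, hn⟩ := pow_unbounded_of_one_lt (B / w 0) hc
  have h1 := hpow n
  have h2 := hB n
  rw [div_lt_iff₀ h0] at hn
  linarith

lemma saddle_false (x y : ℕ → ℝ) (μ ν ε B : ℝ) (hε : 0 ≤ ε)
    (h1 : 1 < |μ| - 2*ε) (h2 : |ν| + 2*ε ≤ |μ| - 2*ε)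
    (hx : ∀ n, |x (n+1) - μ * x n| ≤ ε * (|x n| + |y n|))
    (hy : ∀ n, |y (n+1) - ν * y n| ≤ ε * (|x n| + |y n|))
    (hy0 : |y 0| ≤ |x 0|) (hx0 : 0 < |x 0|) (hxB : ∀ n, |x n| ≤ B) : False := by
  have cone : ∀ n, |y n| ≤ |x n| := by
    intro n; induction n with
    | zero => exact hy0
    | succ n ih =>
      have hxn := hx n
      have hyn := hy n
      have e1 : |μ| * |x n| - |x (n+1)| ≤ |x (n+1) - μ * x n| := by
        rw [abs_sub_comm]
        have := abs_sub_abs_le_abs_sub (μ * x n) (x (n+1))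
        rw [abs_mul] at this; linarith
      have e2 : |y (n+1)| - |ν| * |y n| ≤ |y (n+1) - ν * y n| := by
        have := abs_sub_abs_le_abs_sub (y (n+1)) (ν * y n)
        rw [abs_mul] at this; linarith
      have hν : 0 ≤ |ν| := abs_nonneg _
      nlinarith [abs_nonneg (x n), abs_nonneg (y n)]
  have step : ∀ n, (|μ| - 2*ε) * |x n| ≤ |x (n+1)| := by
    intro n
    have hxn := hx n
    have e1 : |μ| * |x n| - |x (n+1)| ≤ |x (n+1) - μ * x n| := by
      rw [abs_sub_comm]
      have := abs_sub_abs_le_abs_sub (μ * x n) (x (n+1))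
      rw [abs_mul] at this; linarith
    have := cone n
    nlinarith [abs_nonneg (x n), abs_nonneg (y n)]
  exact growth_false (fun n => |x n|) (|μ| - 2*ε) B h1 hx0 step hxB

lemma jordan_false (x y : ℕ → ℝ) (μ κ ε B : ℝ) (hκ : 0 < κ) (hκ1 : κ ≤ 1) (hε : 0 ≤ ε)
    (hc : 1 < |μ| - κ - ε/κ)
    (hx : ∀ n, |x (n+1) - μ * x n| ≤ ε * (|x n| + |y n|))
    (hy : ∀ n, y (n+1) = μ * y n + x n)
    (h0 : 0 < |x 0| + κ * |y 0|)
    (hB : ∀ n, |x n| + κ * |y n| ≤ B) : False := by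
  refine growth_false (fun n => |x n| + κ * |y n|) (|μ| - κ - ε/κ) B hc h0 ?_ hB
  intro n
  have hxn := hx n
  have e1 : |μ| * |x n| - |x (n+1)| ≤ |x (n+1) - μ * x n| := by
    rw [abs_sub_comm]
    have := abs_sub_abs_le_abs_sub (μ * x n) (x (n+1))
    rw [abs_mul] at this; linarith
  have e2 : |μ| * |y n| - |x n| ≤ |y (n+1)| := by
    have h3 : |μ * y n| - |μ * y n + x n| ≤ |x n| := by
      have := abs_sub_abs_le_abs_sub (μ * y n) (μ * y n + x n)
      have h4 : μ * y n - (μ * y n + x n) = -(x n) := by ring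
      rw [h4, abs_neg] at this; linarith
    rw [abs_mul] at h3; rw [hy n]; linarith
  have hww : ε * (|x n| + |y n|) ≤ (ε/κ) * (|x n| + κ * |y n|) := by
    rw [div_mul_eq_mul_div, le_div_iff₀ hκ]
    nlinarith [mul_nonneg (mul_nonneg hε (sub_nonneg.mpr hκ1)) (abs_nonneg (x n))]
  have e2' := mul_le_mul_of_nonneg_left e2 hκ.le
  show (|μ| - κ - ε/κ) * (|x n| + κ * |y n|) ≤ |x (n+1)| + κ * |y (n+1)|
  nlinarith [abs_nonneg (x n), abs_nonneg (y n),
    mul_nonneg (mul_nonneg hκ.le hκ.le) (abs_nonneg (y n))]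

lemma complex_false (z : ℕ → ℂ) (μ : ℂ) (ε B : ℝ)
    (h1 : 1 < ‖μ‖ - ε)
    (hz : ∀ n, ‖z (n+1) - μ * z n‖ ≤ ε * ‖z n‖)
    (h0 : 0 < ‖z 0‖) (hB : ∀ n, ‖z n‖ ≤ B) : False := by
  refine growth_false (fun n => ‖z n‖) (‖μ‖ - ε) B h1 h0 ?_ hB
  intro n
  have hzn := hz n
  have e1 : ‖μ * z n‖ - ‖z (n+1)‖ ≤
      ‖z (n+1) - μ * z n‖ := by
    have h3 := abs_norm_sub_norm_le (z (n+1)) (μ * z n)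
    have h4 := neg_abs_le (‖z (n+1)‖ - ‖μ * z n‖)
    linarith
  rw [norm_mul] at e1
  show (‖μ‖ - ε) * ‖z n‖ ≤ ‖z (n+1)‖
  nlinarith [norm_nonneg (z n)]

lemma taylor_bound (Φ : ℝ → ℝ) (φ : ℝ) (h : HasDerivAt Φ φ 0) (c : ℝ) (hc : 0 < c) :
    ∃ r, 0 < r ∧ ∀ x : ℝ, |x| ≤ r → |Φ x - Φ 0 - φ * x| ≤ c * |x| := by
  have h2 := hasDerivAt_iff_isLittleO.mp h
  have h3 := h2.def hc
  rw [Metric.eventually_nhds_iff] at h3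
  obtain ⟨ε, hε, hball⟩ := h3
  refine ⟨ε/2, by positivity, fun x hx => ?_⟩
  have hd : dist x 0 < ε := by
    rw [Real.dist_eq, sub_zero]
    linarith
  have := hball hd
  simp only [sub_zero, smul_eq_mul, Real.norm_eq_abs] at this
  have he : Φ x - Φ 0 - x * φ = Φ x - Φ 0 - φ * x := by ring
  rw [he] at this
  exact this

lemma Ebound (α J lam φ η' r : ℝ) (Φ : ℝ → ℝ) (Ψ : ℝ × ℝ → ℝ × ℝ)
    (hα : 0 < α) (hα1 : α < 1) (hlam : 0 < lam)
    (hΨ : ∀ x : ℝ × ℝ, Ψ x =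
      (x.1 + lam * x.2,
       α * (1 - 2 * Φ (x.1 + (lam - J) * x.2))
         + (1 - α) * (1 - 2 * Φ (x.1 + lam * x.2))))
    (hΦ0 : Φ 0 = 1 / 2) (hη' : 0 ≤ η')
    (hr : ∀ x : ℝ, |x| ≤ r → |Φ x - Φ 0 - φ * x| ≤ η' * |x|)
    (v : ℝ × ℝ) (hv : ‖v‖ * (1 + lam + |lam - J|) ≤ r) :
    (Ψ v).1 = v.1 + lam * v.2 ∧
    |(Ψ v).2 + 2*φ*(v.1 + (lam - α*J)*v.2)| ≤ 2*η'*(1 + lam + |lam - J|) * ‖v‖ := by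
  have h1 : |v.1| ≤ ‖v‖ := by rw [← Real.norm_eq_abs]; exact norm_fst_le v
  have h2 : |v.2| ≤ ‖v‖ := by rw [← Real.norm_eq_abs]; exact norm_snd_le v
  have hvn : (0:ℝ) ≤ ‖v‖ := norm_nonneg v
  have habs : (0:ℝ) ≤ |lam - J| := abs_nonneg _
  have hu : |v.1 + (lam - J) * v.2| ≤ (1 + lam + |lam - J|) * ‖v‖ := by
    have := abs_add_le v.1 ((lam - J) * v.2)
    rw [abs_mul] at this
    nlinarith [abs_mul (lam - J) v.2, mul_le_mul_of_nonneg_left h2 habs]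
  have hw : |v.1 + lam * v.2| ≤ (1 + lam + |lam - J|) * ‖v‖ := by
    have := abs_add_le v.1 (lam * v.2)
    rw [abs_mul, abs_of_pos hlam] at this
    nlinarith [mul_le_mul_of_nonneg_left h2 hlam.le]
  constructor
  · rw [hΨ v]
  have hur : |v.1 + (lam - J) * v.2| ≤ r := hu.trans (by linarith [hv, mul_comm ‖v‖ (1 + lam + |lam - J|)] )
  have hwr : |v.1 + lam * v.2| ≤ r := hw.trans (by linarith [hv, mul_comm ‖v‖ (1 + lam + |lam - J|)])
  have hgu := hr _ hur
  have hgw := hr _ hwr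
  have key : (Ψ v).2 + 2*φ*(v.1 + (lam - α*J)*v.2)
      = (-(2*α))*(Φ (v.1 + (lam - J) * v.2) - Φ 0 - φ*(v.1 + (lam - J) * v.2))
        + (-(2*(1-α)))*(Φ (v.1 + lam * v.2) - Φ 0 - φ*(v.1 + lam * v.2)) := by
    rw [hΨ v, hΦ0]; ring
  rw [key]
  have hb := abs_add_le
    ((-(2*α))*(Φ (v.1 + (lam - J) * v.2) - Φ 0 - φ*(v.1 + (lam - J) * v.2)))
    ((-(2*(1-α)))*(Φ (v.1 + lam * v.2) - Φ 0 - φ*(v.1 + lam * v.2)))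
  rw [abs_mul, abs_mul, abs_neg, abs_neg, abs_of_pos (by linarith : (0:ℝ) < 2*α),
    abs_of_pos (by linarith : (0:ℝ) < 2*(1-α))] at hb
  have b1 : |Φ (v.1 + (lam - J) * v.2) - Φ 0 - φ*(v.1 + (lam - J) * v.2)|
      ≤ η' * ((1 + lam + |lam - J|) * ‖v‖) :=
    hgu.trans (mul_le_mul_of_nonneg_left hu hη')
  have b2 : |Φ (v.1 + lam * v.2) - Φ 0 - φ*(v.1 + lam * v.2)|
      ≤ η' * ((1 + lam + |lam - J|) * ‖v‖) :=
    hgw.trans (mul_le_mul_of_nonneg_left hw hη')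
  have c1 := mul_le_mul_of_nonneg_left b1 (by linarith : (0:ℝ) ≤ 2*α)
  have c2 := mul_le_mul_of_nonneg_left b2 (by linarith : (0:ℝ) ≤ 2*(1-α))
  nlinarith [hb]

set_option maxHeartbeats 1000000 in
lemma main_real (α J lam : ℝ) (Φ : ℝ → ℝ) (φ : ℝ) (Ψ : ℝ × ℝ → ℝ × ℝ)
    (hα : 0 < α) (hα1 : α < 1) (hlam : 0 < lam) (hφ : 0 < φ)
    (hΨ : ∀ x : ℝ × ℝ, Ψ x =
      (x.1 + lam * x.2,
       α * (1 - 2 * Φ (x.1 + (lam - J) * x.2))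
         + (1 - α) * (1 - 2 * Φ (x.1 + lam * x.2))))
    (hΦ0 : Φ 0 = 1 / 2)
    (hlo : ∀ c, 0 < c → ∃ r, 0 < r ∧ ∀ x : ℝ, |x| ≤ r → |Φ x - Φ 0 - φ * x| ≤ c * |x|)
    (μ ν : ℝ)
    (hcharμ : μ^2 - (1 - 2*φ*(lam - α*J))*μ + 2*α*J*φ = 0)
    (hcharν : ν^2 - (1 - 2*φ*(lam - α*J))*ν + 2*α*J*φ = 0)
    (hμν : μ ≠ ν) (habsμ : 1 < |μ|) (habsν : |ν| < |μ|) :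
    ∃ ε > (0 : ℝ), ∀ δ > (0 : ℝ), ∃ s : ℕ → ℝ × ℝ,
      (∀ n : ℕ, s (n + 1) = Ψ (s n)) ∧ ‖s 0‖ < δ ∧
      ∃ n : ℕ, 1 ≤ n ∧ ε ≤ ‖s n‖ := by
  obtain ⟨Cc, hCcdef⟩ : ∃ Cc : ℝ, Cc = 1 + lam + |lam - J| := ⟨_, rfl⟩
  have hCcpos : (0:ℝ) < Cc := by
    rw [hCcdef]; linarith only [abs_nonneg (lam - J), hlam]
  obtain ⟨q, hqdef⟩ : ∃ q : ℝ, q = |μ - ν| := ⟨_, rfl⟩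
  have hq : (0:ℝ) < q := hqdef ▸ abs_pos.mpr (sub_ne_zero.mpr hμν)
  obtain ⟨m, hmdef⟩ : ∃ m : ℝ, m = |1 - μ| := ⟨_, rfl⟩
  have hm : (0:ℝ) ≤ m := hmdef ▸ abs_nonneg _
  obtain ⟨K, hKdef⟩ : ∃ K : ℝ, K = (2*φ + q + m)/(2*φ*q) := ⟨_, rfl⟩
  have hKpos : 0 < K := by rw [hKdef]; apply div_pos (by linarith only [hφ, hq, hm]) (by positivity)
  obtain ⟨Mc, hMcdef⟩ : ∃ Mc : ℝ, Mc = |1 - μ| + |1 - ν| + 1 := ⟨_, rfl⟩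
  have hMcpos : 0 < Mc := by
    rw [hMcdef]; linarith only [abs_nonneg (1 - ν), abs_nonneg (1 - μ)]
  obtain ⟨ε, hεdef⟩ : ∃ ε : ℝ, ε = min ((|μ| - |ν|)/4) ((|μ| - 1)/4) := ⟨_, rfl⟩
  have hεpos : 0 < ε := by
    rw [hεdef]
    exact lt_min (by linarith only [habsν, habsμ]) (by linarith only [habsμ])
  have hε1 : 1 < |μ| - 2*ε := by
    have := min_le_right ((|μ| - |ν|)/4) ((|μ| - 1)/4)
    rw [← hεdef] at this; linarith only [this, habsμ]
  have hε2 : |ν| + 2*ε ≤ |μ| - 2*ε := by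
    have := min_le_left ((|μ| - |ν|)/4) ((|μ| - 1)/4)
    rw [← hεdef] at this; linarith only [this, habsν, habsμ]
  obtain ⟨η, hηdef⟩ : ∃ η : ℝ, η = ε / (K * Mc) := ⟨_, rfl⟩
  have hηpos : 0 < η := by rw [hηdef]; exact div_pos hεpos (by positivity)
  obtain ⟨η', hη'def⟩ : ∃ η' : ℝ, η' = η / (2*Cc) := ⟨_, rfl⟩
  have hη'pos : 0 < η' := by rw [hη'def]; exact div_pos hηpos (by linarith only [hCcpos])
  obtain ⟨r, hrpos, hr⟩ := hlo η' hη'pos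
  obtain ⟨ρ, hρdef⟩ : ∃ ρ : ℝ, ρ = r / Cc := ⟨_, rfl⟩
  have hρpos : 0 < ρ := hρdef ▸ div_pos hrpos hCcpos
  have hρr : ρ * Cc = r := by rw [hρdef]; field_simp
  refine ⟨ρ, hρpos, ?_⟩
  intro δ hδ
  obtain ⟨N0, hN0def⟩ : ∃ N0 : ℝ, N0 = |1 - ν| + 2*φ := ⟨_, rfl⟩
  have hN0pos : 0 < N0 := by rw [hN0def]; linarith only [abs_nonneg (1 - ν), hφ]
  have hN0ν : |1 - ν| ≤ N0 := by rw [hN0def]; linarith only [hφ]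
  obtain ⟨t, htdef⟩ : ∃ t : ℝ, t = min ρ δ / (2 * N0) := ⟨_, rfl⟩
  have hminpos : 0 < min ρ δ := lt_min hρpos hδ
  have htpos : 0 < t := by rw [htdef]; exact div_pos hminpos (by linarith only [hN0pos])
  have htN : N0 * t = min ρ δ / 2 := by rw [htdef]; field_simp
  obtain ⟨s, hs0, hsrec⟩ : ∃ s : ℕ → ℝ × ℝ,
      s 0 = ((1 - ν) * t, -(2*φ) * t) ∧ ∀ n, s (n+1) = Ψ (s n) :=
    ⟨fun n => Ψ^[n] ((1 - ν) * t, -(2*φ) * t), rfl,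
      fun n => Function.iterate_succ_apply' Ψ n _⟩
  have hnorm0 : ‖s 0‖ ≤ min ρ δ / 2 := by
    rw [hs0]
    have hn : ‖((1 - ν) * t, -(2*φ) * t)‖ = max |(1 - ν) * t| |(-(2*φ)) * t| := by
      rw [Prod.norm_def, Real.norm_eq_abs, Real.norm_eq_abs]
    rw [hn]
    apply max_le
    · rw [abs_mul, abs_of_pos htpos]
      linarith only [mul_le_mul_of_nonneg_right hN0ν htpos.le, htN]
    · rw [abs_mul, abs_of_pos htpos, abs_neg, abs_of_pos (by linarith only [hφ] : (0:ℝ) < 2*φ)]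
      have hφN : 2*φ ≤ N0 := by rw [hN0def]; linarith only [abs_nonneg (1-ν)]
      linarith only [mul_le_mul_of_nonneg_right hφN htpos.le, htN]
  refine ⟨s, hsrec, lt_of_le_of_lt hnorm0 (by linarith only [min_le_right ρ δ, hδ]), ?_⟩
  by_contra hcon
  push_neg at hcon
  have hsmall : ∀ n, ‖s n‖ ≤ ρ := by
    intro n
    cases n with
    | zero => exact hnorm0.trans (by linarith only [min_le_left ρ δ, hρpos])
    | succ k => exact (hcon (k+1) (Nat.succ_le_succ (Nat.zero_le k))).le
  have hη'Cc : 2*η'*Cc = η := by rw [hη'def]; field_simp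
  have hEb : ∀ n, (s (n+1)).1 = (s n).1 + lam * (s n).2 ∧
      |(s (n+1)).2 + 2*φ*((s n).1 + (lam - α*J)*(s n).2)| ≤ η * ‖s n‖ := by
    intro n
    have hv : ‖s n‖ * (1 + lam + |lam - J|) ≤ r := by
      rw [← hCcdef, ← hρr]
      exact mul_le_mul_of_nonneg_right (hsmall n) hCcpos.le
    have h := Ebound α J lam φ η' r Φ Ψ hα hα1 hlam hΨ hΦ0 hη'pos.le hr (s n) hv
    rw [← hsrec n, ← hCcdef] at h
    refine ⟨h.1, h.2.trans (le_of_eq ?_)⟩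
    rw [hη'Cc]
  obtain ⟨x, hxdef⟩ : ∃ x : ℕ → ℝ, x = fun n => 2*φ*(s n).1 + (1 - μ)*(s n).2 := ⟨_, rfl⟩
  obtain ⟨y, hydef⟩ : ∃ y : ℕ → ℝ, y = fun n => 2*φ*(s n).1 + (1 - ν)*(s n).2 := ⟨_, rfl⟩
  have hxn : ∀ n, x n = 2*φ*(s n).1 + (1 - μ)*(s n).2 := fun n => by rw [hxdef]
  have hyn : ∀ n, y n = 2*φ*(s n).1 + (1 - ν)*(s n).2 := fun n => by rw [hydef]
  have hxrec : ∀ n, x (n+1) - μ * x n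
      = (1 - μ) * ((s (n+1)).2 + 2*φ*((s n).1 + (lam - α*J)*(s n).2)) := by
    intro n
    rw [hxn (n+1), hxn n, (hEb n).1]
    linear_combination (s n).2 * hcharμ
  have hyrec : ∀ n, y (n+1) - ν * y n
      = (1 - ν) * ((s (n+1)).2 + 2*φ*((s n).1 + (lam - α*J)*(s n).2)) := by
    intro n
    rw [hyn (n+1), hyn n, (hEb n).1]
    linear_combination (s n).2 * hcharν
  have hcomp : ∀ n, ‖s n‖ ≤ K * (|x n| + |y n|) := by
    intro n
    have hxy : x n - y n = (ν - μ) * (s n).2 := by rw [hxn n, hyn n]; ring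
    have hd : q * |(s n).2| ≤ |x n| + |y n| := by
      have h3 : |x n - y n| = q * |(s n).2| := by
        rw [hxy, abs_mul, hqdef, abs_sub_comm μ ν]
      have h4 : |x n - y n| ≤ |x n| + |y n| := abs_sub _ _
      linarith only [h3, h4]
    have hp : 2*φ*|(s n).1| ≤ |x n| + m*|(s n).2| := by
      have h3 : 2*φ*(s n).1 = x n - (1 - μ)*(s n).2 := by rw [hxn n]; ring
      have h4 : |2*φ*(s n).1| ≤ |x n| + |(1 - μ)*(s n).2| := h3 ▸ abs_sub _ _
      rw [abs_mul (2*φ), abs_mul (1 - μ), abs_of_pos (by linarith only [hφ] : (0:ℝ) < 2*φ),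
        ← hmdef] at h4
      exact h4
    have hnn : ‖s n‖ = max |(s n).1| |(s n).2| := by
      rw [Prod.norm_def, Real.norm_eq_abs, Real.norm_eq_abs]
    rw [hnn]
    apply max_le
    · rw [hKdef, div_mul_eq_mul_div, le_div_iff₀ (by positivity : (0:ℝ) < 2*φ*q)]
      linarith only [mul_le_mul_of_nonneg_left hp hq.le,
        mul_le_mul_of_nonneg_left hd hm,
        mul_nonneg hφ.le (abs_nonneg (x n)), mul_nonneg hφ.le (abs_nonneg (y n)),
        mul_nonneg hq.le (abs_nonneg (y n))]
    · rw [hKdef, div_mul_eq_mul_div, le_div_iff₀ (by positivity : (0:ℝ) < 2*φ*q)]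
      linarith only [mul_le_mul_of_nonneg_left hd (by linarith only [hφ] : (0:ℝ) ≤ 2*φ),
        mul_nonneg hq.le (abs_nonneg (x n)), mul_nonneg hq.le (abs_nonneg (y n)),
        mul_nonneg hm (abs_nonneg (x n)), mul_nonneg hm (abs_nonneg (y n))]
  have hMcK : ∀ c : ℝ, |1 - c| ≤ Mc → ∀ n,
      |1 - c| * |(s (n+1)).2 + 2*φ*((s n).1 + (lam - α*J)*(s n).2)|
        ≤ ε * (|x n| + |y n|) := by
    intro c hc n
    have h5 := (hEb n).2.trans (mul_le_mul_of_nonneg_left (hcomp n) hηpos.le)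
    have h7 : Mc * (η * (K * (|x n| + |y n|))) = ε * (|x n| + |y n|) := by
      rw [hηdef]; field_simp
    calc |1 - c| * |(s (n+1)).2 + 2*φ*((s n).1 + (lam - α*J)*(s n).2)|
        ≤ |1 - c| * (η * (K * (|x n| + |y n|))) :=
          mul_le_mul_of_nonneg_left h5 (abs_nonneg _)
      _ ≤ Mc * (η * (K * (|x n| + |y n|))) := by
          apply mul_le_mul_of_nonneg_right hc; positivity
      _ = ε * (|x n| + |y n|) := h7
  have hx' : ∀ n, |x (n+1) - μ * x n| ≤ ε * (|x n| + |y n|) := by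
    intro n
    rw [hxrec n, abs_mul]
    exact hMcK μ (by rw [hMcdef]; linarith only [abs_nonneg (1 - ν)]) n
  have hy' : ∀ n, |y (n+1) - ν * y n| ≤ ε * (|x n| + |y n|) := by
    intro n
    rw [hyrec n, abs_mul]
    exact hMcK ν (by rw [hMcdef]; linarith only [abs_nonneg (1 - μ)]) n
  have hy0 : y 0 = 0 := by rw [hyn 0, hs0]; ring
  have hx0 : 0 < |x 0| := by
    have h8 : x 0 = 2*φ*t*(μ - ν) := by rw [hxn 0, hs0]; ring
    rw [h8]
    exact abs_pos.mpr (mul_ne_zero (by positivity) (sub_ne_zero.mpr hμν))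
  have hxB : ∀ n, |x n| ≤ (2*φ + m) * ρ := by
    intro n
    have h9 : |x n| ≤ 2*φ*|(s n).1| + m*|(s n).2| := by
      rw [hxn n]
      calc |2*φ*(s n).1 + (1 - μ)*(s n).2| ≤ |2*φ*(s n).1| + |(1 - μ)*(s n).2| := abs_add_le _ _
        _ = 2*φ*|(s n).1| + m*|(s n).2| := by
            rw [abs_mul (2*φ), abs_mul (1 - μ),
              abs_of_pos (by linarith only [hφ] : (0:ℝ) < 2*φ), hmdef]
    have ha : |(s n).1| ≤ ‖s n‖ := by rw [← Real.norm_eq_abs]; exact norm_fst_le _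
    have hb : |(s n).2| ≤ ‖s n‖ := by rw [← Real.norm_eq_abs]; exact norm_snd_le _
    have hc : (2*φ + m) * ‖s n‖ ≤ (2*φ + m) * ρ :=
      mul_le_mul_of_nonneg_left (hsmall n) (by linarith only [hφ, hm])
    linarith only [h9, hc,
      mul_le_mul_of_nonneg_left ha (by linarith only [hφ] : (0:ℝ) ≤ 2*φ),
      mul_le_mul_of_nonneg_left hb hm]
  exact saddle_false x y μ ν ε ((2*φ + m) * ρ) hεpos.le hε1 hε2 hx' hy'
    (by rw [hy0]; simp [hx0.le]) hx0 hxB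

set_option maxHeartbeats 1000000 in
lemma main_jordan (α J lam : ℝ) (Φ : ℝ → ℝ) (φ : ℝ) (Ψ : ℝ × ℝ → ℝ × ℝ)
    (hα : 0 < α) (hα1 : α < 1) (hlam : 0 < lam) (hφ : 0 < φ)
    (hΨ : ∀ x : ℝ × ℝ, Ψ x =
      (x.1 + lam * x.2,
       α * (1 - 2 * Φ (x.1 + (lam - J) * x.2))
         + (1 - α) * (1 - 2 * Φ (x.1 + lam * x.2))))
    (hΦ0 : Φ 0 = 1 / 2)
    (hlo : ∀ c, 0 < c → ∃ r, 0 < r ∧ ∀ x : ℝ, |x| ≤ r → |Φ x - Φ 0 - φ * x| ≤ c * |x|)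
    (μ : ℝ)
    (hcharμ : μ^2 - (1 - 2*φ*(lam - α*J))*μ + 2*α*J*φ = 0)
    (hjid : (1 - μ)^2 = 2*φ*lam) (habsμ : 1 < |μ|) :
    ∃ ε > (0 : ℝ), ∀ δ > (0 : ℝ), ∃ s : ℕ → ℝ × ℝ,
      (∀ n : ℕ, s (n + 1) = Ψ (s n)) ∧ ‖s 0‖ < δ ∧
      ∃ n : ℕ, 1 ≤ n ∧ ε ≤ ‖s n‖ := by
  obtain ⟨Cc, hCcdef⟩ : ∃ Cc : ℝ, Cc = 1 + lam + |lam - J| := ⟨_, rfl⟩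
  have hCcpos : (0:ℝ) < Cc := by
    rw [hCcdef]; linarith only [abs_nonneg (lam - J), hlam]
  obtain ⟨q, hqdef⟩ : ∃ q : ℝ, q = |1 - μ| := ⟨_, rfl⟩
  have hq : (0:ℝ) < q := by
    rw [hqdef]
    apply abs_pos.mpr
    intro h
    rw [h] at hjid
    nlinarith only [hjid, hφ, hlam]
  have hq2 : q^2 = 2*φ*lam := by rw [hqdef, sq_abs]; exact hjid
  obtain ⟨K, hKdef⟩ : ∃ K : ℝ, K = (q^2 + 2*φ + 2*φ*q)/(2*φ*q) := ⟨_, rfl⟩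
  have hKpos : 0 < K := by
    rw [hKdef]; apply div_pos (by positivity) (by positivity)
  obtain ⟨κ, hκdef⟩ : ∃ κ : ℝ, κ = min 1 ((|μ| - 1)/4) := ⟨_, rfl⟩
  have hκpos : 0 < κ := by
    rw [hκdef]; exact lt_min one_pos (by linarith only [habsμ])
  have hκ1 : κ ≤ 1 := by rw [hκdef]; exact min_le_left _ _
  have hκ4 : κ ≤ (|μ| - 1)/4 := by rw [hκdef]; exact min_le_right _ _
  obtain ⟨ε, hεdef⟩ : ∃ ε : ℝ, ε = κ*(|μ| - 1)/4 := ⟨_, rfl⟩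
  have hεpos : 0 < ε := by
    rw [hεdef]; apply div_pos (by nlinarith only [hκpos, habsμ]) (by norm_num)
  have hεκ : ε/κ ≤ (|μ| - 1)/4 := by
    rw [hεdef, div_le_div_iff₀ hκpos (by norm_num : (0:ℝ) < 4)]
    nlinarith only [hκpos, hκ1, habsμ]
  have hc : 1 < |μ| - κ - ε/κ := by linarith only [hεκ, hκ4, habsμ]
  obtain ⟨η, hηdef⟩ : ∃ η : ℝ, η = ε / (K * q) := ⟨_, rfl⟩
  have hηpos : 0 < η := by rw [hηdef]; exact div_pos hεpos (by positivity)
  obtain ⟨η', hη'def⟩ : ∃ η' : ℝ, η' = η / (2*Cc) := ⟨_, rfl⟩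
  have hη'pos : 0 < η' := by rw [hη'def]; exact div_pos hηpos (by linarith only [hCcpos])
  obtain ⟨r, hrpos, hr⟩ := hlo η' hη'pos
  obtain ⟨ρ, hρdef⟩ : ∃ ρ : ℝ, ρ = r / Cc := ⟨_, rfl⟩
  have hρpos : 0 < ρ := hρdef ▸ div_pos hrpos hCcpos
  have hρr : ρ * Cc = r := by rw [hρdef]; field_simp
  refine ⟨ρ, hρpos, ?_⟩
  intro δ hδ
  obtain ⟨t, htdef⟩ : ∃ t : ℝ, t = min ρ δ / 2 := ⟨_, rfl⟩
  have hminpos : 0 < min ρ δ := lt_min hρpos hδ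
  have htpos : 0 < t := by rw [htdef]; linarith only [hminpos]
  obtain ⟨s, hs0, hsrec⟩ : ∃ s : ℕ → ℝ × ℝ,
      s 0 = (t, 0) ∧ ∀ n, s (n+1) = Ψ (s n) :=
    ⟨fun n => Ψ^[n] (t, 0), rfl, fun n => Function.iterate_succ_apply' Ψ n _⟩
  have hnorm0 : ‖s 0‖ ≤ min ρ δ / 2 := by
    rw [hs0]
    have hn : ‖((t : ℝ), (0:ℝ))‖ = max |t| |(0:ℝ)| := by
      rw [Prod.norm_def, Real.norm_eq_abs, Real.norm_eq_abs]
    rw [hn]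
    apply max_le
    · rw [abs_of_pos htpos, htdef]
    · simp; linarith only [hminpos]
  refine ⟨s, hsrec, lt_of_le_of_lt hnorm0 (by linarith only [min_le_right ρ δ, hδ]), ?_⟩
  by_contra hcon
  push_neg at hcon
  have hsmall : ∀ n, ‖s n‖ ≤ ρ := by
    intro n
    cases n with
    | zero => exact hnorm0.trans (by linarith only [min_le_left ρ δ, hρpos])
    | succ k => exact (hcon (k+1) (Nat.succ_le_succ (Nat.zero_le k))).le
  have hη'Cc : 2*η'*Cc = η := by rw [hη'def]; field_simp
  have hEb : ∀ n, (s (n+1)).1 = (s n).1 + lam * (s n).2 ∧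
      |(s (n+1)).2 + 2*φ*((s n).1 + (lam - α*J)*(s n).2)| ≤ η * ‖s n‖ := by
    intro n
    have hv : ‖s n‖ * (1 + lam + |lam - J|) ≤ r := by
      rw [← hCcdef, ← hρr]
      exact mul_le_mul_of_nonneg_right (hsmall n) hCcpos.le
    have h := Ebound α J lam φ η' r Φ Ψ hα hα1 hlam hΨ hΦ0 hη'pos.le hr (s n) hv
    rw [← hsrec n, ← hCcdef] at h
    refine ⟨h.1, h.2.trans (le_of_eq ?_)⟩
    rw [hη'Cc]
  obtain ⟨x, hxdef⟩ : ∃ x : ℕ → ℝ, x = fun n => 2*φ*(s n).1 + (1 - μ)*(s n).2 := ⟨_, rfl⟩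
  obtain ⟨y, hydef⟩ : ∃ y : ℕ → ℝ, y = fun n => ((1 - μ)/lam)*(s n).1 := ⟨_, rfl⟩
  have hxn : ∀ n, x n = 2*φ*(s n).1 + (1 - μ)*(s n).2 := fun n => by rw [hxdef]
  have hyn : ∀ n, y n = ((1 - μ)/lam)*(s n).1 := fun n => by rw [hydef]
  have hxrec : ∀ n, x (n+1) - μ * x n
      = (1 - μ) * ((s (n+1)).2 + 2*φ*((s n).1 + (lam - α*J)*(s n).2)) := by
    intro n
    rw [hxn (n+1), hxn n, (hEb n).1]
    linear_combination (s n).2 * hcharμ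
  have hyrec : ∀ n, y (n+1) = μ * y n + x n := by
    intro n
    rw [hyn (n+1), hyn n, hxn n, (hEb n).1]
    field_simp
    linear_combination (s n).1 * hjid
  have hlamy : ∀ n, lam * y n = (1 - μ) * (s n).1 := by
    intro n; rw [hyn n]; field_simp
  have hcomp : ∀ n, ‖s n‖ ≤ K * (|x n| + |y n|) := by
    intro n
    have hpy : q * |(s n).1| = lam * |y n| := by
      have h1 : |lam * y n| = |(1 - μ) * (s n).1| := by rw [hlamy n]
      rw [abs_mul, abs_mul, abs_of_pos hlam, ← hqdef] at h1
      linarith only [h1]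
    have hpy2 : 2*φ*q*|(s n).1| = q^2*|y n| := by
      have h2 := congrArg (fun z : ℝ => 2*φ*z) hpy
      have h2 : 2*φ*(q * |(s n).1|) = 2*φ*(lam * |y n|) := h2
      rw [hq2]
      linarith only [h2]
    have hd : q*|(s n).2| ≤ |x n| + 2*φ*|(s n).1| := by
      have h3 : (1 - μ)*(s n).2 = x n - 2*φ*(s n).1 := by rw [hxn n]; ring
      have h4 : |(1 - μ)*(s n).2| ≤ |x n| + |2*φ*(s n).1| := h3 ▸ abs_sub _ _
      rw [abs_mul (1 - μ), abs_mul (2*φ), abs_of_pos (by linarith only [hφ] : (0:ℝ) < 2*φ),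
        ← hqdef] at h4
      exact h4
    have hnn : ‖s n‖ = max |(s n).1| |(s n).2| := by
      rw [Prod.norm_def, Real.norm_eq_abs, Real.norm_eq_abs]
    rw [hnn]
    apply max_le
    · rw [hKdef, div_mul_eq_mul_div, le_div_iff₀ (by positivity : (0:ℝ) < 2*φ*q)]
      linarith only [hpy2, mul_nonneg (sq_nonneg q) (abs_nonneg (x n)),
        mul_nonneg (mul_nonneg hφ.le hq.le) (abs_nonneg (x n)),
        mul_nonneg (mul_nonneg hφ.le hq.le) (abs_nonneg (y n)),
        mul_nonneg hφ.le (abs_nonneg (x n)), mul_nonneg hφ.le (abs_nonneg (y n))]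
    · rw [hKdef, div_mul_eq_mul_div, le_div_iff₀ (by positivity : (0:ℝ) < 2*φ*q)]
      have h5 := mul_le_mul_of_nonneg_left hd (by linarith only [hφ] : (0:ℝ) ≤ 2*φ)
      have hpy3 : 4*φ^2*|(s n).1| = 2*φ*q*|y n| := by
        apply mul_left_cancel₀ hq.ne'
        linear_combination (4*φ^2) * hpy - (2*φ*|y n|) * hq2
      linarith only [h5, hpy3, mul_nonneg (sq_nonneg q) (abs_nonneg (x n)),
        mul_nonneg (sq_nonneg q) (abs_nonneg (y n)),
        mul_nonneg hφ.le (abs_nonneg (y n)),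
        mul_nonneg (mul_nonneg hφ.le hq.le) (abs_nonneg (x n)),
        mul_nonneg (mul_nonneg hφ.le hq.le) (abs_nonneg (y n))]
  have hx' : ∀ n, |x (n+1) - μ * x n| ≤ ε * (|x n| + |y n|) := by
    intro n
    rw [hxrec n, abs_mul, ← hqdef]
    have h5 := (hEb n).2.trans (mul_le_mul_of_nonneg_left (hcomp n) hηpos.le)
    have h7 : q * (η * (K * (|x n| + |y n|))) = ε * (|x n| + |y n|) := by
      rw [hηdef]; field_simp
    calc q * |(s (n+1)).2 + 2*φ*((s n).1 + (lam - α*J)*(s n).2)|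
        ≤ q * (η * (K * (|x n| + |y n|))) := mul_le_mul_of_nonneg_left h5 hq.le
      _ = ε * (|x n| + |y n|) := h7
  have hx0 : 0 < |x 0| + κ * |y 0| := by
    have h8 : x 0 = 2*φ*t := by rw [hxn 0, hs0]; ring
    have h9 : (0:ℝ) < 2*φ*t := by positivity
    rw [h8, abs_of_pos h9]
    have : 0 ≤ κ * |y 0| := mul_nonneg hκpos.le (abs_nonneg _)
    linarith only [h9, this]
  have hB : ∀ n, |x n| + κ * |y n| ≤ (2*φ + q + q/lam) * ρ := by
    intro n
    have ha : |(s n).1| ≤ ‖s n‖ := by rw [← Real.norm_eq_abs]; exact norm_fst_le _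
    have hb : |(s n).2| ≤ ‖s n‖ := by rw [← Real.norm_eq_abs]; exact norm_snd_le _
    have h9 : |x n| ≤ 2*φ*|(s n).1| + q*|(s n).2| := by
      rw [hxn n]
      calc |2*φ*(s n).1 + (1 - μ)*(s n).2| ≤ |2*φ*(s n).1| + |(1 - μ)*(s n).2| := abs_add_le _ _
        _ = 2*φ*|(s n).1| + q*|(s n).2| := by
            rw [abs_mul (2*φ), abs_mul (1 - μ),
              abs_of_pos (by linarith only [hφ] : (0:ℝ) < 2*φ), hqdef]
    have h10 : lam * |y n| ≤ q * ρ := by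
      have hpy : q * |(s n).1| = lam * |y n| := by
        have h1 : |lam * y n| = |(1 - μ) * (s n).1| := by rw [hlamy n]
        rw [abs_mul, abs_mul, abs_of_pos hlam, ← hqdef] at h1
        linarith only [h1]
      rw [← hpy]
      exact mul_le_mul_of_nonneg_left (ha.trans (hsmall n)) hq.le
    have h11 : |y n| ≤ q/lam * ρ := by
      rw [div_mul_eq_mul_div, le_div_iff₀ hlam]
      linarith only [h10]
    have h12 : κ * |y n| ≤ |y n| := by
      nlinarith only [hκ1, hκpos, abs_nonneg (y n)]
    have h13 : 2*φ*|(s n).1| + q*|(s n).2| ≤ (2*φ + q)*ρ := by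
      have c1 := mul_le_mul_of_nonneg_left (ha.trans (hsmall n))
        (by linarith only [hφ] : (0:ℝ) ≤ 2*φ)
      have c2 := mul_le_mul_of_nonneg_left (hb.trans (hsmall n)) hq.le
      linarith only [c1, c2]
    linarith only [h9, h11, h12, h13]
  exact jordan_false x y μ κ ε ((2*φ + q + q/lam) * ρ) hκpos hκ1 hεpos.le hc hx' hyrec hx0 hB

set_option maxHeartbeats 1000000 in
lemma main_complex (α J lam : ℝ) (Φ : ℝ → ℝ) (φ : ℝ) (Ψ : ℝ × ℝ → ℝ × ℝ)
    (hα : 0 < α) (hα1 : α < 1) (hlam : 0 < lam) (hφ : 0 < φ)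
    (hΨ : ∀ x : ℝ × ℝ, Ψ x =
      (x.1 + lam * x.2,
       α * (1 - 2 * Φ (x.1 + (lam - J) * x.2))
         + (1 - α) * (1 - 2 * Φ (x.1 + lam * x.2))))
    (hΦ0 : Φ 0 = 1 / 2)
    (hlo : ∀ c, 0 < c → ∃ r, 0 < r ∧ ∀ x : ℝ, |x| ≤ r → |Φ x - Φ 0 - φ * x| ≤ c * |x|)
    (a b : ℝ) (hb : 0 < b)
    (ha2 : 2*a = 1 - 2*φ*(lam - α*J))
    (hab : a^2 + b^2 = 2*α*J*φ)
    (hD1 : 1 < 2*α*J*φ) :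
    ∃ ε > (0 : ℝ), ∀ δ > (0 : ℝ), ∃ s : ℕ → ℝ × ℝ,
      (∀ n : ℕ, s (n + 1) = Ψ (s n)) ∧ ‖s 0‖ < δ ∧
      ∃ n : ℕ, 1 ≤ n ∧ ε ≤ ‖s n‖ := by
  obtain ⟨Cc, hCcdef⟩ : ∃ Cc : ℝ, Cc = 1 + lam + |lam - J| := ⟨_, rfl⟩
  have hCcpos : (0:ℝ) < Cc := by
    rw [hCcdef]; linarith only [abs_nonneg (lam - J), hlam]
  obtain ⟨μ, hμdef⟩ : ∃ μ : ℂ, μ = (a:ℂ) + (b:ℂ)*Complex.I := ⟨_, rfl⟩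
  have hμre : μ.re = a := by rw [hμdef]; simp
  have hμim : μ.im = b := by rw [hμdef]; simp
  have hcharC : μ^2 - (1 - 2*(φ:ℂ)*((lam:ℂ) - (α:ℂ)*(J:ℂ)))*μ + 2*(α:ℂ)*(J:ℂ)*(φ:ℂ) = 0 := by
    rw [hμdef, Complex.ext_iff]
    constructor
    · simp only [Complex.add_re, Complex.sub_re, Complex.mul_re, Complex.mul_im,
        Complex.add_im, Complex.sub_im, pow_two, Complex.ofReal_re, Complex.ofReal_im,
        Complex.I_re, Complex.I_im, Complex.zero_re, Complex.zero_im, Complex.one_re,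
        Complex.one_im, Complex.re_ofNat, Complex.im_ofNat]
      ring_nf
      linear_combination a * ha2 - hab
    · simp only [Complex.add_re, Complex.sub_re, Complex.mul_re, Complex.mul_im,
        Complex.add_im, Complex.sub_im, pow_two, Complex.ofReal_re, Complex.ofReal_im,
        Complex.I_re, Complex.I_im, Complex.zero_re, Complex.zero_im, Complex.one_re,
        Complex.one_im, Complex.re_ofNat, Complex.im_ofNat]
      ring_nf
      linear_combination b * ha2
  have habsμ2 : (‖μ‖)^2 = 2*α*J*φ := by
    rw [Complex.sq_norm, Complex.normSq_apply, hμre, hμim]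
    nlinarith only [hab]
  have habsμ : 1 < ‖μ‖ := by
    nlinarith only [habsμ2, hD1, norm_nonneg μ]
  obtain ⟨Mc, hMcdef⟩ : ∃ Mc : ℝ, Mc = ‖1 - μ‖ := ⟨_, rfl⟩
  have hμ1 : (1:ℂ) - μ ≠ 0 := by
    intro h
    have h2 : ((1:ℂ) - μ).im = 0 := by rw [h]; simp
    rw [Complex.sub_im, hμim, Complex.one_im] at h2
    linarith only [h2, hb]
  have hMcpos : 0 < Mc := by rw [hMcdef]; exact norm_pos_iff.mpr hμ1
  obtain ⟨K, hKdef⟩ : ∃ K : ℝ, K = (2*φ + b + |1 - a|)/(2*φ*b) := ⟨_, rfl⟩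
  have hKpos : 0 < K := by
    rw [hKdef]
    apply div_pos (by linarith only [hφ, hb, abs_nonneg (1 - a)]) (by positivity)
  obtain ⟨ε, hεdef⟩ : ∃ ε : ℝ, ε = (‖μ‖ - 1)/2 := ⟨_, rfl⟩
  have hεpos : 0 < ε := by rw [hεdef]; linarith only [habsμ]
  have hε1 : 1 < ‖μ‖ - ε := by rw [hεdef]; linarith only [habsμ]
  obtain ⟨η, hηdef⟩ : ∃ η : ℝ, η = ε / (K * Mc) := ⟨_, rfl⟩
  have hηpos : 0 < η := by rw [hηdef]; exact div_pos hεpos (by positivity)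
  obtain ⟨η', hη'def⟩ : ∃ η' : ℝ, η' = η / (2*Cc) := ⟨_, rfl⟩
  have hη'pos : 0 < η' := by rw [hη'def]; exact div_pos hηpos (by linarith only [hCcpos])
  obtain ⟨r, hrpos, hr⟩ := hlo η' hη'pos
  obtain ⟨ρ, hρdef⟩ : ∃ ρ : ℝ, ρ = r / Cc := ⟨_, rfl⟩
  have hρpos : 0 < ρ := hρdef ▸ div_pos hrpos hCcpos
  have hρr : ρ * Cc = r := by rw [hρdef]; field_simp
  refine ⟨ρ, hρpos, ?_⟩
  intro δ hδ
  obtain ⟨t, htdef⟩ : ∃ t : ℝ, t = min ρ δ / 2 := ⟨_, rfl⟩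
  have hminpos : 0 < min ρ δ := lt_min hρpos hδ
  have htpos : 0 < t := by rw [htdef]; linarith only [hminpos]
  obtain ⟨s, hs0, hsrec⟩ : ∃ s : ℕ → ℝ × ℝ,
      s 0 = (t, 0) ∧ ∀ n, s (n+1) = Ψ (s n) :=
    ⟨fun n => Ψ^[n] (t, 0), rfl, fun n => Function.iterate_succ_apply' Ψ n _⟩
  have hnorm0 : ‖s 0‖ ≤ min ρ δ / 2 := by
    rw [hs0]
    have hn : ‖((t : ℝ), (0:ℝ))‖ = max |t| |(0:ℝ)| := by
      rw [Prod.norm_def, Real.norm_eq_abs, Real.norm_eq_abs]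
    rw [hn]
    apply max_le
    · rw [abs_of_pos htpos, htdef]
    · simp; linarith only [hminpos]
  refine ⟨s, hsrec, lt_of_le_of_lt hnorm0 (by linarith only [min_le_right ρ δ, hδ]), ?_⟩
  by_contra hcon
  push_neg at hcon
  have hsmall : ∀ n, ‖s n‖ ≤ ρ := by
    intro n
    cases n with
    | zero => exact hnorm0.trans (by linarith only [min_le_left ρ δ, hρpos])
    | succ k => exact (hcon (k+1) (Nat.succ_le_succ (Nat.zero_le k))).le
  have hη'Cc : 2*η'*Cc = η := by rw [hη'def]; field_simp
  have hEb : ∀ n, (s (n+1)).1 = (s n).1 + lam * (s n).2 ∧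
      |(s (n+1)).2 + 2*φ*((s n).1 + (lam - α*J)*(s n).2)| ≤ η * ‖s n‖ := by
    intro n
    have hv : ‖s n‖ * (1 + lam + |lam - J|) ≤ r := by
      rw [← hCcdef, ← hρr]
      exact mul_le_mul_of_nonneg_right (hsmall n) hCcpos.le
    have h := Ebound α J lam φ η' r Φ Ψ hα hα1 hlam hΨ hΦ0 hη'pos.le hr (s n) hv
    rw [← hsrec n, ← hCcdef] at h
    refine ⟨h.1, h.2.trans (le_of_eq ?_)⟩
    rw [hη'Cc]
  obtain ⟨z, hzdef⟩ : ∃ z : ℕ → ℂ,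
      z = fun n => 2*(φ:ℂ)*((s n).1 : ℂ) + (1 - μ)*((s n).2 : ℂ) := ⟨_, rfl⟩
  have hzn : ∀ n, z n = 2*(φ:ℂ)*((s n).1 : ℂ) + (1 - μ)*((s n).2 : ℂ) :=
    fun n => by rw [hzdef]
  have hzrec : ∀ n, z (n+1) - μ * z n
      = (1 - μ) * (((s (n+1)).2 + 2*φ*((s n).1 + (lam - α*J)*(s n).2) : ℝ) : ℂ) := by
    intro n
    have h1 : ((s (n+1)).1 : ℂ) = ((s n).1 : ℂ) + (lam:ℂ) * ((s n).2:ℂ) := by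
      rw [← Complex.ofReal_mul, ← Complex.ofReal_add]
      exact_mod_cast congrArg (fun u : ℝ => (u : ℂ)) (hEb n).1
    rw [hzn (n+1), hzn n, h1]
    push_cast
    linear_combination ((s n).2 : ℂ) * hcharC
  have hzim : ∀ n, (z n).im = -b * (s n).2 := by
    intro n
    rw [hzn n]
    simp [Complex.add_im, Complex.mul_im, hμim, hμre]
    try ring
  have hzre : ∀ n, (z n).re = 2*φ*(s n).1 + (1 - a)*(s n).2 := by
    intro n
    rw [hzn n]
    simp [Complex.add_re, Complex.mul_re, hμim, hμre]
    try ring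
  have hd : ∀ n, b * |(s n).2| ≤ ‖z n‖ := by
    intro n
    have h2 := Complex.abs_im_le_norm (z n)
    rw [hzim n, abs_mul, abs_neg, abs_of_pos hb] at h2
    exact h2
  have hp : ∀ n, 2*φ*|(s n).1| ≤ ‖z n‖ + |1 - a| * |(s n).2| := by
    intro n
    have h2 := Complex.abs_re_le_norm (z n)
    rw [hzre n] at h2
    have h4 := abs_sub_abs_le_abs_sub (2*φ*(s n).1) (2*φ*(s n).1 + (1 - a)*(s n).2)
    have h5 : (2*φ*(s n).1) - (2*φ*(s n).1 + (1 - a)*(s n).2) = -((1 - a)*(s n).2) := by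
      ring
    rw [h5, abs_neg] at h4
    rw [abs_mul (2*φ), abs_mul (1 - a), abs_of_pos (by linarith only [hφ] : (0:ℝ) < 2*φ)] at h4
    linarith only [h2, h4]
  have hcomp : ∀ n, ‖s n‖ ≤ K * ‖z n‖ := by
    intro n
    have hnn : ‖s n‖ = max |(s n).1| |(s n).2| := by
      rw [Prod.norm_def, Real.norm_eq_abs, Real.norm_eq_abs]
    rw [hnn]
    apply max_le
    · rw [hKdef, div_mul_eq_mul_div, le_div_iff₀ (by positivity : (0:ℝ) < 2*φ*b)]
      have h5 := mul_le_mul_of_nonneg_left (hp n) hb.le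
      have h6 := mul_le_mul_of_nonneg_left (hd n) (abs_nonneg (1 - a))
      linarith only [h5, h6, mul_nonneg hφ.le (norm_nonneg (z n))]
    · rw [hKdef, div_mul_eq_mul_div, le_div_iff₀ (by positivity : (0:ℝ) < 2*φ*b)]
      have h5 := mul_le_mul_of_nonneg_left (hd n) (by linarith only [hφ] : (0:ℝ) ≤ 2*φ)
      linarith only [h5, mul_nonneg hb.le (norm_nonneg (z n)),
        mul_nonneg (abs_nonneg (1 - a)) (norm_nonneg (z n))]
  have hz' : ∀ n, ‖z (n+1) - μ * z n‖ ≤ ε * ‖z n‖ := by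
    intro n
    rw [hzrec n, norm_mul, Complex.norm_real, Real.norm_eq_abs, ← hMcdef]
    have h5 := (hEb n).2.trans (mul_le_mul_of_nonneg_left (hcomp n) hηpos.le)
    have h7 : Mc * (η * (K * ‖z n‖)) = ε * ‖z n‖ := by
      rw [hηdef]; field_simp
    calc Mc * |(s (n+1)).2 + 2*φ*((s n).1 + (lam - α*J)*(s n).2)|
        ≤ Mc * (η * (K * ‖z n‖)) := mul_le_mul_of_nonneg_left h5 hMcpos.le
      _ = ε * ‖z n‖ := h7
  have hz0 : 0 < ‖z 0‖ := by
    have h8 : z 0 = ((2*φ*t : ℝ) : ℂ) := by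
      rw [hzn 0, hs0]
      push_cast
      ring
    rw [h8, Complex.norm_real, Real.norm_eq_abs, abs_of_pos (by positivity : (0:ℝ) < 2*φ*t)]
    positivity
  have hzB : ∀ n, ‖z n‖ ≤ (2*φ + Mc) * ρ := by
    intro n
    have ha1 : |(s n).1| ≤ ‖s n‖ := by rw [← Real.norm_eq_abs]; exact norm_fst_le _
    have hb1 : |(s n).2| ≤ ‖s n‖ := by rw [← Real.norm_eq_abs]; exact norm_snd_le _
    have h9 : ‖z n‖ ≤ 2*φ*|(s n).1| + Mc*|(s n).2| := by
      rw [hzn n]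
      calc ‖2*(φ:ℂ)*((s n).1:ℂ) + (1 - μ)*((s n).2:ℂ)‖
          ≤ ‖2*(φ:ℂ)*((s n).1:ℂ)‖ + ‖(1 - μ)*((s n).2:ℂ)‖ :=
            norm_add_le _ _
        _ = 2*φ*|(s n).1| + Mc*|(s n).2| := by
            have e1 : ‖2*(φ:ℂ)*((s n).1:ℂ)‖ = 2*φ*|(s n).1| := by
              rw [show (2*(φ:ℂ)*((s n).1:ℂ)) = ((2*φ*(s n).1 : ℝ) : ℂ) by push_cast; ring,
                Complex.norm_real, Real.norm_eq_abs, abs_mul (2*φ),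
                abs_of_pos (by linarith only [hφ] : (0:ℝ) < 2*φ)]
            have e2 : ‖(1 - μ)*((s n).2:ℂ)‖ = Mc*|(s n).2| := by
              rw [norm_mul, Complex.norm_real, Real.norm_eq_abs, hMcdef]
            rw [e1, e2]
    have c1 := mul_le_mul_of_nonneg_left (ha1.trans (hsmall n))
      (by linarith only [hφ] : (0:ℝ) ≤ 2*φ)
    have c2 := mul_le_mul_of_nonneg_left (hb1.trans (hsmall n)) hMcpos.le
    linarith only [h9, c1, c2]
  exact complex_false z μ ε ((2*φ + Mc) * ρ) hε1 hz' hz0 hzB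

set_option maxHeartbeats 1000000 in
/-- If λΦ′(0) > 1 + 2αJΦ′(0), or λΦ′(0) ≤ 1 + 2αJΦ′(0) and 2αJΦ′(0) > 1,
then the origin is an unstable equilibrium of the dynamical system generated by Ψ. -/
theorem origin_unstable
    (α J lam : ℝ) (Φ Φ' : ℝ → ℝ)
    (hα : 0 < α) (hα1 : α < 1) (hJ : 0 < J) (hlam : 0 < lam)
    (hmono : Monotone Φ)
    (hbot : Filter.Tendsto Φ Filter.atBot (nhds 0))
    (htop : Filter.Tendsto Φ Filter.atTop (nhds 1))
    (hderiv : ∀ x, HasDerivAt Φ (Φ' x) x)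
    (hmax : ∀ x, Φ' x ≤ Φ' 0)
    (hincr : StrictMonoOn Φ' (Set.Iio (0 : ℝ)))
    (hdecr : StrictAntiOn Φ' (Set.Ioi (0 : ℝ)))
    (hΦ0 : Φ 0 = 1 / 2)
    (hC2 : ∃ U ∈ nhds (0 : ℝ), ContDiffOn ℝ 2 Φ U)
    (Ψ : ℝ × ℝ → ℝ × ℝ)
    (hΨ : ∀ x : ℝ × ℝ, Ψ x =
      (x.1 + lam * x.2,
       α * (1 - 2 * Φ (x.1 + (lam - J) * x.2))
         + (1 - α) * (1 - 2 * Φ (x.1 + lam * x.2))))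
    (hyp : 1 + 2 * α * J * Φ' 0 < lam * Φ' 0 ∨
      (lam * Φ' 0 ≤ 1 + 2 * α * J * Φ' 0 ∧ 1 < 2 * α * J * Φ' 0)) :
    ∃ ε > (0 : ℝ), ∀ δ > (0 : ℝ), ∃ s : ℕ → ℝ × ℝ,
      (∀ n : ℕ, s (n + 1) = Ψ (s n)) ∧ ‖s 0‖ < δ ∧
      ∃ n : ℕ, 1 ≤ n ∧ ε ≤ ‖s n‖ := by
  have hd2 : (0:ℝ) ≤ Φ' (-2) := deriv_nonneg_of_monotone hmono (hderiv (-2))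
  have h12 : Φ' (-2) < Φ' (-1) :=
    hincr (by norm_num : (-2:ℝ) ∈ Set.Iio (0:ℝ)) (by norm_num : (-1:ℝ) ∈ Set.Iio (0:ℝ))
      (by norm_num)
  have hφ : 0 < Φ' 0 := lt_of_lt_of_le (lt_of_le_of_lt hd2 h12) (hmax (-1))
  have hlo : ∀ c, 0 < c → ∃ r, 0 < r ∧ ∀ x : ℝ, |x| ≤ r →
      |Φ x - Φ 0 - Φ' 0 * x| ≤ c * |x| :=
    fun c hc => taylor_bound Φ (Φ' 0) (hderiv 0) c hc
  obtain ⟨T, hTdef⟩ : ∃ T : ℝ, T = 1 - 2*(Φ' 0)*(lam - α*J) := ⟨_, rfl⟩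
  obtain ⟨D, hDdef⟩ : ∃ D : ℝ, D = 2*α*J*(Φ' 0) := ⟨_, rfl⟩
  have hD : 0 < D := by rw [hDdef]; positivity
  rcases hyp with hyp1 | ⟨hyp2a, hyp2b⟩
  · -- Case 1 : saddle with μ < -1 < ν < 0
    have hTD : 1 + T + D < 0 := by rw [hTdef, hDdef]; linarith only [hyp1]
    have hΔ : 0 < T^2 - 4*D := by nlinarith only [hTD, hD, sq_nonneg (1 - D)]
    obtain ⟨sq, hsqdef⟩ : ∃ sq : ℝ, sq = Real.sqrt (T^2 - 4*D) := ⟨_, rfl⟩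
    have hsq2 : sq^2 = T^2 - 4*D := by rw [hsqdef]; exact Real.sq_sqrt hΔ.le
    have hsqpos : 0 < sq := by rw [hsqdef]; exact Real.sqrt_pos.mpr hΔ
    obtain ⟨μ, hμdef⟩ : ∃ μ : ℝ, μ = (T - sq)/2 := ⟨_, rfl⟩
    obtain ⟨ν, hνdef⟩ : ∃ ν : ℝ, ν = (T + sq)/2 := ⟨_, rfl⟩
    have hcharμ : μ^2 - (1 - 2*(Φ' 0)*(lam - α*J))*μ + 2*α*J*(Φ' 0) = 0 := by
      rw [hμdef, ← hTdef, ← hDdef]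
      linear_combination (1/4 : ℝ) * hsq2
    have hcharν : ν^2 - (1 - 2*(Φ' 0)*(lam - α*J))*ν + 2*α*J*(Φ' 0) = 0 := by
      rw [hνdef, ← hTdef, ← hDdef]
      linear_combination (1/4 : ℝ) * hsq2
    have hμlt : μ < -1 := by
      rw [hμdef]
      nlinarith only [hsq2, hsqpos, hTD, hD]
    have hνneg : ν < 0 := by
      rw [hνdef]
      nlinarith only [hsq2, hsqpos, hTD, hD]
    have hνgt : -1 < ν := by
      rw [hνdef]
      nlinarith only [hsq2, hsqpos, hTD, hD]
    have hμν : μ ≠ ν := by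
      rw [hμdef, hνdef]
      intro h
      have : sq = 0 := by linarith only [congrArg (fun u => 2*u) h |>.symm, h]
      linarith only [this, hsqpos]
    have habsμ : 1 < |μ| := by
      rw [abs_of_neg (by linarith only [hμlt] : μ < 0)]
      linarith only [hμlt]
    have habsν : |ν| < |μ| := by
      rw [abs_of_neg hνneg, abs_of_neg (by linarith only [hμlt] : μ < 0)]
      linarith only [hμlt, hνgt]
    exact main_real α J lam Φ (Φ' 0) Ψ hα hα1 hlam hφ hΨ hΦ0 hlo μ ν hcharμ hcharν
      hμν habsμ habsν
  · -- Case 2 : 1 < D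
    have hD1 : 1 < D := by rw [hDdef]; exact hyp2b
    have hp1 : 1 - T + D = 2*lam*(Φ' 0) := by rw [hTdef, hDdef]; ring
    rcases lt_trichotomy (T^2 - 4*D) 0 with hΔneg | hΔ0 | hΔpos
    · -- complex eigenvalues
      obtain ⟨b, hbdef⟩ : ∃ b : ℝ, b = Real.sqrt (4*D - T^2) / 2 := ⟨_, rfl⟩
      have hb2 : (2*b)^2 = 4*D - T^2 := by
        rw [hbdef]
        rw [show 2*(Real.sqrt (4*D - T^2)/2) = Real.sqrt (4*D - T^2) by ring]
        exact Real.sq_sqrt (by linarith only [hΔneg])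
      have hb : 0 < b := by
        rw [hbdef]
        have := Real.sqrt_pos.mpr (by linarith only [hΔneg] : 0 < 4*D - T^2)
        linarith only [this]
      have ha2 : 2*(T/2) = 1 - 2*(Φ' 0)*(lam - α*J) := by rw [← hTdef]; ring
      have hab : (T/2)^2 + b^2 = 2*α*J*(Φ' 0) := by
        rw [← hDdef]
        nlinarith only [hb2]
      exact main_complex α J lam Φ (Φ' 0) Ψ hα hα1 hlam hφ hΨ hΦ0 hlo (T/2) b hb ha2 hab
        (by rw [← hDdef]; exact hD1)
    · -- double eigenvalue (Jordan)
      obtain ⟨μ, hμdef⟩ : ∃ μ : ℝ, μ = T/2 := ⟨_, rfl⟩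
      have hcharμ : μ^2 - (1 - 2*(Φ' 0)*(lam - α*J))*μ + 2*α*J*(Φ' 0) = 0 := by
        rw [hμdef, ← hTdef, ← hDdef]
        linear_combination (-(1:ℝ)/4) * hΔ0
      have hjid : (1 - μ)^2 = 2*(Φ' 0)*lam := by
        rw [hμdef]
        linear_combination hp1 + (1/4 : ℝ) * hΔ0
      have hμsq : 1 < μ^2 := by
        rw [hμdef]
        nlinarith only [hΔ0, hD1]
      have habsμ : 1 < |μ| := by
        nlinarith only [hμsq, sq_abs μ, abs_nonneg μ]
      exact main_jordan α J lam Φ (Φ' 0) Ψ hα hα1 hlam hφ hΨ hΦ0 hlo μ hcharμ hjid habsμ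
    · -- distinct real eigenvalues, both outside the unit disc
      obtain ⟨sq, hsqdef⟩ : ∃ sq : ℝ, sq = Real.sqrt (T^2 - 4*D) := ⟨_, rfl⟩
      have hsq2 : sq^2 = T^2 - 4*D := by rw [hsqdef]; exact Real.sq_sqrt hΔpos.le
      have hsqpos : 0 < sq := by rw [hsqdef]; exact Real.sqrt_pos.mpr hΔpos
      have hT2 : 4 < T^2 := by nlinarith only [hΔpos, hD1]
      rcases le_or_gt T 0 with hTneg | hTpos
      · -- both roots negative, μ = (T - sq)/2 dominant
        obtain ⟨μ, hμdef⟩ : ∃ μ : ℝ, μ = (T - sq)/2 := ⟨_, rfl⟩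
        obtain ⟨ν, hνdef⟩ : ∃ ν : ℝ, ν = (T + sq)/2 := ⟨_, rfl⟩
        have hcharμ : μ^2 - (1 - 2*(Φ' 0)*(lam - α*J))*μ + 2*α*J*(Φ' 0) = 0 := by
          rw [hμdef, ← hTdef, ← hDdef]
          linear_combination (1/4 : ℝ) * hsq2
        have hcharν : ν^2 - (1 - 2*(Φ' 0)*(lam - α*J))*ν + 2*α*J*(Φ' 0) = 0 := by
          rw [hνdef, ← hTdef, ← hDdef]
          linear_combination (1/4 : ℝ) * hsq2
        have hprod : μ * ν = D := by
          rw [hμdef, hνdef]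
          linear_combination (-(1:ℝ)/4) * hsq2
        have hνneg : ν < 0 := by
          rw [hνdef]
          nlinarith only [hsq2, hsqpos, hD, hTneg]
        have hμleν : μ < ν := by
          rw [hμdef, hνdef]
          linarith only [hsqpos]
        have habsμ1 : 1 < -μ := by
          nlinarith only [hprod, hD1, hνneg, hμleν]
        have habsμ : 1 < |μ| := by
          rw [abs_of_neg (by linarith only [habsμ1] : μ < 0)]
          exact habsμ1
        have habsν : |ν| < |μ| := by
          rw [abs_of_neg hνneg, abs_of_neg (by linarith only [habsμ1] : μ < 0)]
          linarith only [hμleν]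
        exact main_real α J lam Φ (Φ' 0) Ψ hα hα1 hlam hφ hΨ hΦ0 hlo μ ν hcharμ hcharν
          (by linarith only [hμleν]) habsμ habsν
      · -- both roots positive, μ = (T + sq)/2 dominant
        obtain ⟨μ, hμdef⟩ : ∃ μ : ℝ, μ = (T + sq)/2 := ⟨_, rfl⟩
        obtain ⟨ν, hνdef⟩ : ∃ ν : ℝ, ν = (T - sq)/2 := ⟨_, rfl⟩
        have hcharμ : μ^2 - (1 - 2*(Φ' 0)*(lam - α*J))*μ + 2*α*J*(Φ' 0) = 0 := by
          rw [hμdef, ← hTdef, ← hDdef]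
          linear_combination (1/4 : ℝ) * hsq2
        have hcharν : ν^2 - (1 - 2*(Φ' 0)*(lam - α*J))*ν + 2*α*J*(Φ' 0) = 0 := by
          rw [hνdef, ← hTdef, ← hDdef]
          linear_combination (1/4 : ℝ) * hsq2
        have hprod : μ * ν = D := by
          rw [hμdef, hνdef]
          linear_combination (-(1:ℝ)/4) * hsq2
        have hνpos : 0 < ν := by
          rw [hνdef]
          nlinarith only [hsq2, hsqpos, hD, hTpos]
        have hνleμ : ν < μ := by
          rw [hμdef, hνdef]
          linarith only [hsqpos]
        have habsμ1 : 1 < μ := by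
          nlinarith only [hprod, hD1, hνpos, hνleμ]
        have habsμ : 1 < |μ| := by
          rw [abs_of_pos (by linarith only [habsμ1] : 0 < μ)]
          exact habsμ1
        have habsν : |ν| < |μ| := by
          rw [abs_of_pos hνpos, abs_of_pos (by linarith only [habsμ1] : 0 < μ)]
          linarith only [hνleμ]
        exact main_real α J lam Φ (Φ' 0) Ψ hα hα1 hlam hφ hΨ hΦ0 hlo μ ν hcharμ hcharν
          (by linarith only [hνleμ]) habsμ habsν
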